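/- Let p_l, p_r, p_s ∈ (0,1]. Then I − Q_shs is invertible, and the vector t = (I − Q_shs)⁻¹·𝟏 satisfies t₀₀ = (p_l p_r + p_l² + p_r² − p_l² p_r²)/(p_l p_r p_s (p_l + p_r − p_l p_r)). (t₀₀ is the mean latency, in units of the step duration τ, of two-link entanglement distribution with single-heralded entanglement generation started from the empty state 00: the mean hitting time of the swapping-success state S. It equals 1/π_S, the reciprocal of the equilibrium probability of state S.) -/

import Mathlib

open Matrix

/-- Mean latency of two-link entanglement distribution with single-heralded
entanglement generation via the fundamental matrix: for `p_l, p_r, p_s ∈ (0,1]`,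
`I − Q_shs` is invertible and `t = (I − Q_shs)⁻¹·𝟏` satisfies
`t₀₀ = (p_l p_r + p_l² + p_r² − p_l² p_r²)/(p_l p_r p_s (p_l + p_r − p_l p_r))`.
States are ordered `(00, 01, 10, 11)`. -/
theorem two_link_single_heralded_mean_latency (pl pr ps : ℝ)
    (hl : 0 < pl) (hl' : pl ≤ 1) (hr : 0 < pr) (hr' : pr ≤ 1)
    (hs : 0 < ps) (hs' : ps ≤ 1) :
    let Q : Matrix (Fin 4) (Fin 4) ℝ :=
      !![(1 - pl) * (1 - pr), (1 - pl) * pr, pl * (1 - pr), pl * pr;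
         0, 1 - pl, 0, pl;
         0, 0, 1 - pr, pr;
         1 - ps, 0, 0, 0]
    let t : Fin 4 → ℝ := (1 - Q)⁻¹ *ᵥ ![1, 1, 1, 1]
    IsUnit (1 - Q) ∧
      t 0 = (pl * pr + pl ^ 2 + pr ^ 2 - pl ^ 2 * pr ^ 2)
        / (pl * pr * ps * (pl + pr - pl * pr)) := by
  intro Q t
  have hS : 0 < pl + pr - pl * pr := by nlinarith
  set M : Matrix (Fin 4) (Fin 4) ℝ :=
    !![pl + pr - pl * pr, -((1 - pl) * pr), -(pl * (1 - pr)), -(pl * pr);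
       0, pl, 0, -pl;
       0, 0, pr, -pr;
       -(1 - ps), 0, 0, 1] with hM
  have hQM : 1 - Q = M := by
    ext i j
    fin_cases i <;> fin_cases j <;>
      simp [Q, hM, Matrix.sub_apply, Matrix.one_apply, Matrix.vecHead, Matrix.vecTail] <;> ring
  have hdet : M.det = pl * pr * ps * (pl + pr - pl * pr) := by
    simp [hM, Matrix.det_succ_row_zero, Fin.sum_univ_succ, Matrix.det_fin_three,
      Matrix.submatrix_apply, Fin.succAbove, Fin.castSucc, Fin.castAdd,
      Fin.castLE]
    ring
  have hdet' : M.det ≠ 0 := by rw [hdet]; positivity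
  have hunit : IsUnit (1 - Q) := by
    rw [hQM, Matrix.isUnit_iff_isUnit_det, isUnit_iff_ne_zero]
    exact hdet'
  refine ⟨hunit, ?_⟩
  set t0 : ℝ := (pl * pr + pl ^ 2 + pr ^ 2 - pl ^ 2 * pr ^ 2)
      / (pl * pr * ps * (pl + pr - pl * pr)) with ht0
  set t3 : ℝ := 1 + (1 - ps) * t0 with ht3
  set v : Fin 4 → ℝ := ![t0, t3 + 1 / pl, t3 + 1 / pr, t3] with hv
  have key : M *ᵥ v = ![1, 1, 1, 1] := by
    funext i
    fin_cases i <;>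
      simp only [hM, hv, Matrix.mulVec, dotProduct, Fin.sum_univ_four,
        Matrix.cons_val', Matrix.cons_val_zero, Matrix.cons_val_one, Matrix.cons_val, Matrix.of_apply,
        Matrix.head_cons, Matrix.empty_val', Matrix.cons_val_fin_one,
        Matrix.head_fin_const, ht3, ht0] <;>
      norm_num <;>
      field_simp <;>
      ring
  have hres : t = v := by
    have h2 : M⁻¹ *ᵥ (M *ᵥ v) = v := by
      rw [Matrix.mulVec_mulVec, Matrix.nonsing_inv_mul _ (isUnit_iff_ne_zero.mpr hdet'), Matrix.one_mulVec]
    rw [key] at h2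
    calc t = (1 - Q)⁻¹ *ᵥ ![1, 1, 1, 1] := rfl
      _ = M⁻¹ *ᵥ ![1, 1, 1, 1] := by rw [hQM]
      _ = v := h2
  rw [hres]
  simp [hv]
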